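/- For $\alpha = 1$ (logarithmic potential), the numbers $s_j = \frac{1}{2}\sum_{l=1}^{k-1} \frac{\sin^2(jl\zeta/2)}{\sin^{2}(l\zeta/2)}$ with $\zeta = 2\pi/k$ satisfy $s_j = \frac{j(k-j)}{2}$ for $j = 0, 1, \dots, k$. -/

import Mathlib

open Real
set_option maxHeartbeats 1000000

lemma key_trig (m x : ℝ) :
    Real.sin (m + x) ^ 2 + Real.sin (m - x) ^ 2 - 2 * Real.sin m ^ 2
      = 2 * Real.cos (2 * m) * Real.sin x ^ 2 := by
  rw [Real.sin_add, Real.sin_sub, Real.cos_two_mul']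
  nlinarith [Real.sin_sq_add_cos_sq x]

lemma sum_cos_zero (k m : ℕ) (hm1 : 1 ≤ m) (hm2 : m < k) :
    ∑ l ∈ Finset.range k, Real.cos (2 * π * m * l / k) = 0 := by
  have hk0 : (0:ℝ) < k := by exact_mod_cast (by omega : 0 < k)
  have hkc : (k:ℂ) ≠ 0 := by exact_mod_cast hk0.ne'
  set x : ℂ := Complex.exp ((2 * π * m / k : ℝ) * Complex.I) with hx
  have hx1 : x ≠ 1 := by
    intro hcontra
    rw [hx, Complex.exp_eq_one_iff] at hcontra
    obtain ⟨n, hn⟩ := hcontra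
    have h2 : (2 * π * m / k : ℝ) = n * (2 * π) := by
      have h3 : ((2 * π * m / k : ℝ) : ℂ) = (n : ℂ) * (2 * π) := by
        apply mul_right_cancel₀ Complex.I_ne_zero
        rw [hn]; ring
      exact_mod_cast h3
    have hπ : (0:ℝ) < π := Real.pi_pos
    have hmn : (m : ℝ) = n * k := by
      field_simp at h2
      nlinarith [h2]
    rcases le_or_gt (n : ℝ) 0 with hn0 | hn0
    · have hm0 : (0:ℝ) < m := by exact_mod_cast hm1
      nlinarith
    · have hn1 : (1:ℝ) ≤ n := by
        have : (0:ℤ) < n := by exact_mod_cast hn0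
        exact_mod_cast this
      have hmk : (m:ℝ) < k := by exact_mod_cast hm2
      nlinarith
  have hxk : x ^ k = 1 := by
    rw [hx, ← Complex.exp_nat_mul]
    have h4 : (k : ℂ) * (((2 * π * m / k : ℝ)) * Complex.I)
        = (m : ℤ) * (2 * π * Complex.I) := by
      push_cast
      field_simp
    rw [h4, Complex.exp_int_mul_two_pi_mul_I]
  have hgeom : ∑ l ∈ Finset.range k, x ^ l = 0 := by
    rw [geom_sum_eq hx1, hxk]
    simp
  have hre : ∀ l : ℕ, Real.cos (2 * π * m * l / k) = (x ^ l).re := by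
    intro l
    rw [hx, ← Complex.exp_nat_mul]
    have h5 : (l : ℂ) * (((2 * π * m / k : ℝ)) * Complex.I)
        = ((2 * π * m * l / k : ℝ) : ℂ) * Complex.I := by
      push_cast; field_simp
    rw [h5, Complex.exp_ofReal_mul_I_re]
  calc ∑ l ∈ Finset.range k, Real.cos (2 * π * m * l / k)
      = ∑ l ∈ Finset.range k, (x ^ l).re :=
        Finset.sum_congr rfl fun l _ => hre l
    _ = (∑ l ∈ Finset.range k, x ^ l).re := by rw [Complex.re_sum]
    _ = 0 := by rw [hgeom]; simp

lemma sum_cos_neg_one (k m : ℕ) (hk : 2 ≤ k) (hm1 : 1 ≤ m) (hm2 : m < k) :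
    ∑ l ∈ Finset.Icc 1 (k - 1), Real.cos (2 * π * m * l / k) = -1 := by
  have h1 : Finset.Icc 1 (k - 1) = Finset.Ico 1 k := by
    rw [← Finset.Ico_add_one_right_eq_Icc]
    congr 1
    omega
  have h0 : ∑ l ∈ Finset.range k, Real.cos (2 * π * m * l / k) = 0 :=
    sum_cos_zero k m hm1 hm2
  rw [Finset.range_eq_Ico, Finset.sum_eq_sum_Ico_succ_bot (by omega : 0 < k)] at h0
  simp only [Nat.cast_zero, mul_zero, zero_div, Real.cos_zero] at h0
  rw [h1]
  linarith [h0]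

/-- For the logarithmic potential (`α = 1`), the coefficients
`s_j = ½ ∑_{l=1}^{k-1} sin²(jlζ/2)/sin²(lζ/2)` with `ζ = 2π/k` evaluate
explicitly to `s_j = j(k-j)/2` for `0 ≤ j ≤ k`. -/
theorem polygon_coefficients_log_case
    (k : ℕ) (hk : 2 ≤ k) (ζ : ℝ) (hζ : ζ = 2 * π / k) :
    ∀ j : ℕ, j ≤ k →
      (1 / 2) * ∑ l ∈ Finset.Icc 1 (k - 1),
          (Real.sin ((j : ℝ) * l * ζ / 2)) ^ 2 / (Real.sin (l * ζ / 2)) ^ 2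
        = (j : ℝ) * ((k : ℝ) - j) / 2 := by
  have hk0 : (0:ℝ) < k := by positivity
  have hπ : (0:ℝ) < π := Real.pi_pos
  have hsin : ∀ l ∈ Finset.Icc 1 (k - 1), 0 < Real.sin ((l : ℝ) * ζ / 2) := by
    intro l hl
    rw [Finset.mem_Icc] at hl
    have hl1 : (1:ℝ) ≤ l := by exact_mod_cast hl.1
    have hl2 : (l:ℝ) < k := by exact_mod_cast (by omega : l < k)
    apply Real.sin_pos_of_pos_of_lt_pi
    · rw [hζ]; positivity
    · rw [hζ]
      have h : (l:ℝ) * (2 * π / k) / 2 = π * ((l:ℝ)/k) := by field_simp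
      rw [h]
      have hlt : (l:ℝ)/k < 1 := by rw [div_lt_one hk0]; linarith
      nlinarith
  intro j
  induction j using Nat.twoStepInduction with
  | zero =>
    intro _
    simp
  | one =>
    intro _
    have h6 : ∑ l ∈ Finset.Icc 1 (k - 1),
        (Real.sin ((1 : ℝ) * l * ζ / 2)) ^ 2 / (Real.sin (l * ζ / 2)) ^ 2
        = ∑ l ∈ Finset.Icc 1 (k - 1), (1:ℝ) := by
      apply Finset.sum_congr rfl
      intro l hl
      have := hsin l hl
      rw [one_mul, div_self (by positivity)]
    rw [Nat.cast_one, h6, Finset.sum_const, Nat.card_Icc]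
    have h7 : ((k - 1 + 1 - 1 : ℕ) : ℝ) = (k:ℝ) - 1 := by
      have h1 : k - 1 + 1 - 1 = k - 1 := by omega
      rw [h1, Nat.cast_sub (by omega : 1 ≤ k)]
      norm_num
    rw [nsmul_eq_mul, h7]
    ring
  | more j ih1 ih2 =>
    intro hj
    have e1 := ih1 (by omega)
    have e2 := ih2 (by omega)
    have hcos : ∑ l ∈ Finset.Icc 1 (k - 1), Real.cos (2 * π * ((j+1 : ℕ) : ℝ) * l / k) = -1 :=
      sum_cos_neg_one k (j+1) hk (by omega) (by omega)
    have hstep : ∑ l ∈ Finset.Icc 1 (k - 1),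
        (Real.sin ((((j:ℝ)+2)) * l * ζ / 2)) ^ 2 / (Real.sin (l * ζ / 2)) ^ 2
        = ∑ l ∈ Finset.Icc 1 (k - 1),
          (2 * ((Real.sin ((((j:ℝ)+1)) * l * ζ / 2)) ^ 2 / (Real.sin (l * ζ / 2)) ^ 2)
            - (Real.sin ((j : ℝ) * l * ζ / 2)) ^ 2 / (Real.sin (l * ζ / 2)) ^ 2
            + 2 * Real.cos (2 * π * ((j:ℝ)+1) * l / k)) := by
      apply Finset.sum_congr rfl
      intro l hl
      have hs := hsin l hl
      set x : ℝ := (l : ℝ) * ζ / 2 with hxdef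
      set m : ℝ := ((j:ℝ)+1) * l * ζ / 2 with hmdef
      have hmx1 : ((j:ℝ)+2) * l * ζ / 2 = m + x := by rw [hmdef, hxdef]; ring
      have hmx2 : (j:ℝ) * l * ζ / 2 = m - x := by rw [hmdef, hxdef]; ring
      have hcosarg : 2 * π * ((j:ℝ)+1) * l / k = 2 * m := by
        rw [hmdef, hζ]; field_simp
      have hkey := key_trig m x
      rw [hmx1, hmx2, hcosarg]
      have hs2 : Real.sin x ≠ 0 := hs.ne'
      field_simp
      rw [mul_comm m 2]
      nlinarith [hkey, sq_nonneg (Real.sin x)]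
    push_cast at hstep hcos ⊢
    rw [hstep, Finset.sum_add_distrib, Finset.sum_sub_distrib, ← Finset.mul_sum,
      ← Finset.mul_sum, hcos]
    push_cast at e1 e2
    nlinarith [e1, e2]
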